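/- Let n > 2 be an integer, α ∈ (0,1] and p ∈ (0,1)^n. Let G be uniform on {+1,−1}, and conditionally on G let X_1,…,X_n ∈ {−1,0,+1} be independent with X_i = G with probability α(1−p_i), X_i = −G with probability α p_i, and X_i = 0 with probability 1−α. Set w_i = log(1/p_i − 1) and W = (1/n) Σ_{i=1}^n w_i X_i, and let G* = 1{W > 0} − 1{W < 0} + Z·1{W = 0}, where Z is uniform on {+1,−1} and independent of (G, X). Then for every estimator of the form Ĝ = ψ(X, U), where ψ is any function into {+1,−1} and U is a random variable independent of (G, X), one has P(Ĝ ≠ G) ≥ P(G* ≠ G). -/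

import Mathlib

open MeasureTheory Finset
open scoped Classical

/-- Joint probability of `(G, X) = (g, x)` for one task in the crowdsourcing model:
`G` is uniform on `{+1,−1}` and, given `G = g`, the labels are independent with
`X_i = g` w.p. `α(1−p_i)`, `X_i = −g` w.p. `α p_i`, `X_i = 0` w.p. `1−α`. -/
noncomputable def taskScore (n : ℕ) (α : ℝ) (p : Fin n → ℝ) (g : ℤ) (x : Fin n → ℤ) : ℝ :=
  (1 / 2 : ℝ) * ∏ i, (if x i = g then α * (1 - p i) else if x i = -g then α * p i else 1 - α)

lemma measure_eq_sum_of_partition {Ω : Type*} [MeasurableSpace Ω] (μ : Measure Ω)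
    {ι : Type*} (s : Finset ι) (E : ι → Set Ω) (A : Set Ω)
    (hmeas : ∀ i ∈ s, MeasurableSet (A ∩ E i))
    (hdisj : (s : Set ι).PairwiseDisjoint E)
    (hcov : ∀ ω ∈ A, ∃ i ∈ s, ω ∈ E i) :
    μ A = ∑ i ∈ s, μ (A ∩ E i) := by
  have hA : A = ⋃ i ∈ s, A ∩ E i := by
    ext ω
    constructor
    · intro h
      obtain ⟨i, hi, hE⟩ := hcov ω h
      exact Set.mem_biUnion hi ⟨h, hE⟩
    · intro h
      simp only [Set.mem_iUnion] at h
      obtain ⟨i, _, h, _⟩ := h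
      exact h
  conv_lhs => rw [hA]
  exact measure_biUnion_finset (hdisj.mono_on fun i hi => Set.inter_subset_right) hmeas

lemma taskScore_nonneg (n : ℕ) (α : ℝ) (hα : α ∈ Set.Ioc (0:ℝ) 1) (p : Fin n → ℝ)
    (hp : ∀ i, p i ∈ Set.Ioo (0:ℝ) 1) (g : ℤ) (x : Fin n → ℤ) :
    0 ≤ taskScore n α p g x := by
  obtain ⟨hα0, hα1⟩ := hα
  apply mul_nonneg (by norm_num)
  apply Finset.prod_nonneg
  intro i _
  have := (hp i).1; have := (hp i).2
  split_ifs <;> nlinarith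

lemma taskScore_ratio (n : ℕ) (α : ℝ) (p : Fin n → ℝ) (hp : ∀ i, p i ∈ Set.Ioo (0:ℝ) 1)
    (w : Fin n → ℝ) (hw : ∀ i, w i = Real.log (1 / p i - 1))
    (x : Fin n → ℤ) (hx : ∀ i, x i = -1 ∨ x i = 0 ∨ x i = 1) :
    taskScore n α p 1 x = Real.exp (∑ i, w i * (x i : ℝ)) * taskScore n α p (-1) x := by
  unfold taskScore
  rw [Real.exp_sum]
  rw [show ((1:ℝ)/2) * ∏ i, (if x i = (-1:ℤ) then α * (1 - p i) else if x i = -(-1:ℤ) then α * p i else 1 - α)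
      = (1/2) * ∏ i, (if x i = (-1:ℤ) then α * (1 - p i) else if x i = (1:ℤ) then α * p i else 1 - α) by norm_num]
  rw [mul_left_comm, ← Finset.prod_mul_distrib]
  congr 1
  apply Finset.prod_congr rfl
  intro i _
  have hp0 := (hp i).1
  have hp1 := (hp i).2
  have hr : (1:ℝ) / p i - 1 = (1 - p i) / p i := by field_simp
  have hrpos : (0:ℝ) < (1 - p i) / p i := div_pos (by linarith) hp0
  have hexp : Real.exp (w i) = (1 - p i) / p i := by
    rw [hw i, hr, Real.exp_log hrpos]
  rcases hx i with h | h | h <;> rw [h]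
  · norm_num
    rw [Real.exp_neg, hexp, inv_div, div_mul_eq_mul_div, eq_div_iff (by linarith : (1:ℝ) - p i ≠ 0)]
    ring
  · norm_num
  · norm_num
    rw [hexp]
    field_simp

lemma measurableSet_ne_int {Ω : Type*} [MeasurableSpace Ω] {f g : Ω → ℤ}
    (hf : Measurable f) (hg : Measurable g) : MeasurableSet {ω | f ω ≠ g ω} := by
  have h : {ω | f ω ≠ g ω} = ⋃ z : ℤ, f ⁻¹' {z} ∩ (g ⁻¹' {z})ᶜ := by
    ext ω
    simp only [Set.mem_setOf_eq, Set.mem_iUnion, Set.mem_inter_iff, Set.mem_preimage,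
      Set.mem_singleton_iff, Set.mem_compl_iff]
    constructor
    · intro h
      exact ⟨f ω, rfl, fun h' => h h'.symm⟩
    · rintro ⟨z, h1, h2⟩ hc
      exact h2 (by rw [← hc, h1])
  rw [h]
  exact MeasurableSet.iUnion fun z =>
    (hf (measurableSet_singleton z)).inter (hg (measurableSet_singleton z)).compl

/-- the weighted majority vote `G*` with weights `w_i = log(1/p_i − 1)` and fair
random tie-breaking minimizes the error probability among all randomized estimators
`Ĝ = ψ(X, U)` with `U` independent of `(G, X)`. -/
theorem weighted_majority_vote_optimal
    {Ω : Type*} [MeasurableSpace Ω] (μ : Measure Ω) [IsProbabilityMeasure μ]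
    {β : Type*} [MeasurableSpace β]
    (n : ℕ) (hn : 2 < n) (α : ℝ) (hα : α ∈ Set.Ioc (0 : ℝ) 1)
    (p : Fin n → ℝ) (hp : ∀ i, p i ∈ Set.Ioo (0 : ℝ) 1)
    (G : Ω → ℤ) (X : Fin n → Ω → ℤ) (Z : Ω → ℤ) (U : Ω → β)
    (hGmeas : Measurable G) (hXmeas : ∀ i, Measurable (X i))
    (hZmeas : Measurable Z) (hUmeas : Measurable U)
    (hGval : ∀ ω, G ω = 1 ∨ G ω = -1)
    (hXval : ∀ i ω, X i ω = -1 ∨ X i ω = 0 ∨ X i ω = 1)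
    (hZval : ∀ ω, Z ω = 1 ∨ Z ω = -1)
    -- joint law of (G, X):
    (hlaw : ∀ (g : ℤ) (x : Fin n → ℤ), (g = 1 ∨ g = -1) →
      (∀ i, x i = -1 ∨ x i = 0 ∨ x i = 1) →
      μ {ω | G ω = g ∧ ∀ i, X i ω = x i} = ENNReal.ofReal (taskScore n α p g x))
    -- Z is uniform on {+1,−1} and independent of (G, X):
    (hZind : ∀ (z g : ℤ) (x : Fin n → ℤ), (z = 1 ∨ z = -1) →
      μ {ω | Z ω = z ∧ G ω = g ∧ ∀ i, X i ω = x i}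
        = (1 / 2 : ENNReal) * μ {ω | G ω = g ∧ ∀ i, X i ω = x i})
    -- U is independent of (G, X):
    (hUind : ∀ (A : Set β), MeasurableSet A → ∀ (g : ℤ) (x : Fin n → ℤ),
      μ {ω | U ω ∈ A ∧ G ω = g ∧ ∀ i, X i ω = x i}
        = μ {ω | U ω ∈ A} * μ {ω | G ω = g ∧ ∀ i, X i ω = x i})
    -- the weighted majority vote G* with weights w_i = log(1/p_i − 1):
    (w : Fin n → ℝ) (hw : ∀ i, w i = Real.log (1 / p i - 1))
    (W : Ω → ℝ) (hW : ∀ ω, W ω = (1 / (n : ℝ)) * ∑ i, w i * (X i ω : ℝ))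
    (Gstar : Ω → ℤ)
    (hGstar : ∀ ω, Gstar ω = if 0 < W ω then 1 else if W ω < 0 then -1 else Z ω)
    -- an arbitrary randomized estimator Ĝ = ψ(X, U):
    (ψ : (Fin n → ℤ) → β → ℤ)
    (hψmeas : Measurable (Function.uncurry ψ))
    (hψval : ∀ x u, ψ x u = 1 ∨ ψ x u = -1) :
    μ {ω | Gstar ω ≠ G ω} ≤ μ {ω | ψ (fun i => X i ω) (U ω) ≠ G ω} := by
  classical
  -- basic positivity facts
  have hnpos : (0:ℝ) < (n:ℝ) := by
    have : 0 < n := by omega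
    exact_mod_cast this
  have hninv : (0:ℝ) < 1 / (n:ℝ) := by positivity
  -- the value finset and event machinery
  set V : Finset ℤ := {-1, 0, 1} with hV
  set XS : Finset (Fin n → ℤ) := Fintype.piFinset (fun _ => V) with hXSdef
  have hmemXS : ∀ x : Fin n → ℤ, x ∈ XS ↔ ∀ i, x i = -1 ∨ x i = 0 ∨ x i = 1 := by
    intro x
    rw [hXSdef]
    simp only [Fintype.mem_piFinset, hV, Finset.mem_insert, Finset.mem_singleton]
  set E : ℤ → (Fin n → ℤ) → Set Ω := fun g x => {ω | G ω = g ∧ ∀ i, X i ω = x i} with hEdef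
  have hEmem : ∀ g x ω, ω ∈ E g x ↔ (G ω = g ∧ ∀ i, X i ω = x i) := by
    intro g x ω; rw [hEdef]; exact Iff.rfl
  have hEmeas : ∀ g x, MeasurableSet (E g x) := by
    intro g x
    have h2 : MeasurableSet {ω | ∀ i, X i ω = x i} := by
      have he : {ω | ∀ i, X i ω = x i} = ⋂ i, (X i) ⁻¹' {x i} := by
        ext ω; simp [Set.mem_iInter]
      rw [he]
      exact MeasurableSet.iInter fun i => hXmeas i (measurableSet_singleton _)
    rw [hEdef]
    exact (hGmeas (measurableSet_singleton g)).inter h2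
  -- measurability of the two error events
  have hWmeas : Measurable W := by
    have : W = fun ω => (1 / (n:ℝ)) * ∑ i, w i * (X i ω : ℝ) := funext hW
    rw [this]
    exact measurable_const.mul (Finset.measurable_sum _ fun i _ =>
      measurable_const.mul ((Measurable.of_discrete).comp (hXmeas i)))
  have hGstarMeas : Measurable Gstar := by
    have : Gstar = fun ω => if 0 < W ω then 1 else if W ω < 0 then -1 else Z ω := funext hGstar
    rw [this]
    refine Measurable.ite (measurableSet_lt measurable_const hWmeas) measurable_const ?_
    exact Measurable.ite (measurableSet_lt hWmeas measurable_const) measurable_const hZmeas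
  have hψxmeas : ∀ x : Fin n → ℤ, Measurable (ψ x) := fun x =>
    hψmeas.comp measurable_prodMk_left
  have hPsiMeas : Measurable fun ω => ψ (fun i => X i ω) (U ω) := by
    have : (fun ω => ψ (fun i => X i ω) (U ω))
        = Function.uncurry ψ ∘ fun ω => ((fun i => X i ω), U ω) := rfl
    rw [this]
    exact hψmeas.comp ((measurable_pi_iff.mpr hXmeas).prodMk hUmeas)
  set Astar : Set Ω := {ω | Gstar ω ≠ G ω} with hAstardef
  set Apsi : Set Ω := {ω | ψ (fun i => X i ω) (U ω) ≠ G ω} with hApsidef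
  have hAstarMeas : MeasurableSet Astar := measurableSet_ne_int hGstarMeas hGmeas
  have hApsiMeas : MeasurableSet Apsi := measurableSet_ne_int hPsiMeas hGmeas
  -- the partition index
  set s : Finset (ℤ × (Fin n → ℤ)) := ({1, -1} : Finset ℤ) ×ˢ XS with hsdef
  have hdisj : (s : Set (ℤ × (Fin n → ℤ))).PairwiseDisjoint (fun gx => E gx.1 gx.2) := by
    intro u _ v _ huv
    simp only [Function.onFun]
    rw [Set.disjoint_left]
    intro ω hu hv
    rw [hEmem] at hu hv
    exact huv (Prod.ext (hu.1 ▸ hv.1 ▸ rfl)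
      (funext fun i => by rw [← hu.2 i, hv.2 i]))
  have hcov : ∀ (A : Set Ω), ∀ ω ∈ A, ∃ gx ∈ s, ω ∈ E gx.1 gx.2 := by
    intro A ω _
    refine ⟨(G ω, fun i => X i ω), ?_, (hEmem _ _ ω).2 ⟨rfl, fun i => rfl⟩⟩
    rw [hsdef, Finset.mem_product]
    refine ⟨?_, (hmemXS _).2 fun i => hXval i ω⟩
    rcases hGval ω with h | h <;> simp [h]
  -- decompose both error probabilities
  have hsum : ∀ (A : Set Ω), MeasurableSet A →
      μ A = ∑ x ∈ XS, (μ (A ∩ E 1 x) + μ (A ∩ E (-1) x)) := by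
    intro A hA
    rw [measure_eq_sum_of_partition μ s (fun gx => E gx.1 gx.2) A
      (fun gx _ => hA.inter (hEmeas _ _)) hdisj (hcov A)]
    rw [hsdef, Finset.sum_product, Finset.sum_pair (by norm_num : (1:ℤ) ≠ -1),
      ← Finset.sum_add_distrib]
  rw [hsum Astar hAstarMeas, hsum Apsi hApsiMeas]
  apply Finset.sum_le_sum
  intro x hx
  have hxval : ∀ i, x i = -1 ∨ x i = 0 ∨ x i = 1 := (hmemXS x).1 hx
  -- probabilities of the atoms
  have hT1 : μ (E 1 x) = ENNReal.ofReal (taskScore n α p 1 x) := by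
    rw [hEdef]; exact hlaw 1 x (Or.inl rfl) hxval
  have hT2 : μ (E (-1) x) = ENNReal.ofReal (taskScore n α p (-1) x) := by
    rw [hEdef]; exact hlaw (-1) x (Or.inr rfl) hxval
  -- the ψ-side pieces
  have hBmeas : ∀ g : ℤ, MeasurableSet {u | ψ x u ≠ g} := by
    intro g
    have : {u | ψ x u ≠ g} = ((ψ x) ⁻¹' {g})ᶜ := rfl
    rw [this]
    exact ((hψxmeas x) (measurableSet_singleton g)).compl
  have hpsi_set : ∀ g : ℤ, Apsi ∩ E g x
      = {ω | U ω ∈ {u | ψ x u ≠ g} ∧ G ω = g ∧ ∀ i, X i ω = x i} := by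
    intro g
    ext ω
    rw [Set.mem_inter_iff, hEmem, hApsidef]
    simp only [Set.mem_setOf_eq]
    constructor
    · rintro ⟨hne, hg, hxx⟩
      have hfun : (fun i => X i ω) = x := funext hxx
      exact ⟨by rw [← hfun, ← hg]; exact hne, hg, hxx⟩
    · rintro ⟨hne, hg, hxx⟩
      have hfun : (fun i => X i ω) = x := funext hxx
      exact ⟨by rw [hfun, hg]; exact hne, hg, hxx⟩
  have hpsi1 : μ (Apsi ∩ E 1 x) = μ {ω | U ω ∈ {u | ψ x u ≠ (1:ℤ)}} * μ (E 1 x) := by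
    rw [hpsi_set 1, hUind _ (hBmeas 1) 1 x, hEdef]
  have hpsi2 : μ (Apsi ∩ E (-1) x) = μ {ω | U ω ∈ {u | ψ x u ≠ (-1:ℤ)}} * μ (E (-1) x) := by
    rw [hpsi_set (-1), hUind _ (hBmeas (-1)) (-1) x, hEdef]
  set a := μ {ω | U ω ∈ {u | ψ x u ≠ (1:ℤ)}} with hadef
  set b := μ {ω | U ω ∈ {u | ψ x u ≠ (-1:ℤ)}} with hbdef
  have hab : a + b = 1 := by
    have hs1 : {ω | U ω ∈ {u | ψ x u ≠ (1:ℤ)}} = (fun ω => ψ x (U ω)) ⁻¹' {(-1 : ℤ)} := by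
      ext ω
      simp only [Set.mem_setOf_eq, Set.mem_preimage, Set.mem_singleton_iff]
      constructor
      · intro h; rcases hψval x (U ω) with h' | h'
        · exact absurd h' h
        · exact h'
      · intro h; rw [h]; decide
    have hs2 : {ω | U ω ∈ {u | ψ x u ≠ (-1:ℤ)}} = (fun ω => ψ x (U ω)) ⁻¹' {(1 : ℤ)} := by
      ext ω
      simp only [Set.mem_setOf_eq, Set.mem_preimage, Set.mem_singleton_iff]
      constructor
      · intro h; rcases hψval x (U ω) with h' | h'
        · exact h'
        · exact absurd h' h
      · intro h; rw [h]; decide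
    have hm : Measurable fun ω => ψ x (U ω) := (hψxmeas x).comp hUmeas
    rw [hadef, hbdef, hs1, hs2,
      ← measure_union ?_ (hm (measurableSet_singleton _))]
    · have huniv : (fun ω => ψ x (U ω)) ⁻¹' {(-1 : ℤ)} ∪ (fun ω => ψ x (U ω)) ⁻¹' {(1 : ℤ)}
          = Set.univ := by
        ext ω
        simp only [Set.mem_union, Set.mem_preimage, Set.mem_singleton_iff, Set.mem_univ,
          iff_true]
        exact (hψval x (U ω)).symm
      rw [huniv, measure_univ]
    · rw [Set.disjoint_left]
      intro ω h1 h2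
      simp only [Set.mem_preimage, Set.mem_singleton_iff] at h1 h2
      omega
  -- comparison of taskScores via the likelihood ratio
  set S : ℝ := ∑ i, w i * ((x i : ℤ) : ℝ) with hSdef
  have hratio : taskScore n α p 1 x = Real.exp S * taskScore n α p (-1) x :=
    taskScore_ratio n α p hp w hw x hxval
  have hnn2 : 0 ≤ taskScore n α p (-1) x := taskScore_nonneg n α hα p hp (-1) x
  -- constancy of W on the atoms
  have hWconst : ∀ g ω, ω ∈ E g x → W ω = (1 / (n:ℝ)) * S := by
    intro g ω hω
    rw [hEmem] at hω
    rw [hW]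
    congr 1
    exact Finset.sum_congr rfl fun i _ => by rw [hω.2 i]
  rw [hpsi1, hpsi2]
  rcases lt_trichotomy 0 S with hS | hS | hS
  · -- S > 0 : G* = 1, error iff G = -1, and t2 ≤ t1
    have hGs : ∀ g ω, ω ∈ E g x → Gstar ω = 1 := by
      intro g ω hω
      rw [hGstar, if_pos (by rw [hWconst g ω hω]; exact mul_pos hninv hS)]
    have e1 : Astar ∩ E 1 x = ∅ := by
      ext ω
      simp only [Set.mem_inter_iff, Set.mem_empty_iff_false, iff_false, not_and]
      intro hA hE
      rw [hAstardef, Set.mem_setOf_eq] at hA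
      exact hA (by rw [hGs 1 ω hE, ((hEmem 1 x ω).1 hE).1])
    have e2 : Astar ∩ E (-1) x = E (-1) x := by
      ext ω
      simp only [Set.mem_inter_iff, and_iff_right_iff_imp]
      intro hE
      rw [hAstardef, Set.mem_setOf_eq, hGs (-1) ω hE, ((hEmem (-1) x ω).1 hE).1]
      decide
    rw [e1, e2, measure_empty, zero_add]
    have ht21 : μ (E (-1) x) ≤ μ (E 1 x) := by
      rw [hT1, hT2, hratio]
      exact ENNReal.ofReal_le_ofReal (by nlinarith [Real.one_le_exp hS.le])
    calc μ (E (-1) x) = (a + b) * μ (E (-1) x) := by rw [hab, one_mul]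
      _ = a * μ (E (-1) x) + b * μ (E (-1) x) := by rw [add_mul]
      _ ≤ a * μ (E 1 x) + b * μ (E (-1) x) := by
          exact add_le_add_left (mul_le_mul' le_rfl ht21) _
  · -- S = 0 : tie, G* = Z, both scores equal
    have hWzero : ∀ g ω, ω ∈ E g x → W ω = 0 := by
      intro g ω hω; rw [hWconst g ω hω, ← hS, mul_zero]
    have hGs : ∀ g ω, ω ∈ E g x → Gstar ω = Z ω := by
      intro g ω hω
      rw [hGstar, if_neg (by rw [hWzero g ω hω]; exact lt_irrefl 0),
        if_neg (by rw [hWzero g ω hω]; exact lt_irrefl 0)]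
    have e1 : Astar ∩ E 1 x = {ω | Z ω = -1 ∧ G ω = 1 ∧ ∀ i, X i ω = x i} := by
      ext ω
      rw [Set.mem_inter_iff, hEmem, hAstardef]
      simp only [Set.mem_setOf_eq]
      constructor
      · rintro ⟨hne, hg, hxx⟩
        rw [hGs 1 ω ((hEmem 1 x ω).2 ⟨hg, hxx⟩), hg] at hne
        rcases hZval ω with h | h
        · exact absurd h hne
        · exact ⟨h, hg, hxx⟩
      · rintro ⟨hz, hg, hxx⟩
        refine ⟨?_, hg, hxx⟩
        rw [hGs 1 ω ((hEmem 1 x ω).2 ⟨hg, hxx⟩), hg, hz]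
        decide
    have e2 : Astar ∩ E (-1) x = {ω | Z ω = 1 ∧ G ω = -1 ∧ ∀ i, X i ω = x i} := by
      ext ω
      rw [Set.mem_inter_iff, hEmem, hAstardef]
      simp only [Set.mem_setOf_eq]
      constructor
      · rintro ⟨hne, hg, hxx⟩
        rw [hGs (-1) ω ((hEmem (-1) x ω).2 ⟨hg, hxx⟩), hg] at hne
        rcases hZval ω with h | h
        · exact ⟨h, hg, hxx⟩
        · exact absurd h hne
      · rintro ⟨hz, hg, hxx⟩
        refine ⟨?_, hg, hxx⟩
        rw [hGs (-1) ω ((hEmem (-1) x ω).2 ⟨hg, hxx⟩), hg, hz]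
        decide
    have heq : μ (E 1 x) = μ (E (-1) x) := by
      rw [hT1, hT2, hratio, ← hS, Real.exp_zero, one_mul]
    rw [e1, e2, hZind (-1) 1 x (Or.inr rfl), hZind 1 (-1) x (Or.inl rfl)]
    have hE1 : {ω | G ω = (1:ℤ) ∧ ∀ i, X i ω = x i} = E 1 x := rfl
    have hE2 : {ω | G ω = (-1:ℤ) ∧ ∀ i, X i ω = x i} = E (-1) x := rfl
    have hhalf : (1/2 : ENNReal) + 1/2 = 1 := by rw [one_div]; exact ENNReal.inv_two_add_inv_two
    rw [hE1, hE2, heq, ← add_mul, ← add_mul, hab, one_mul, hhalf, one_mul]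
  · -- S < 0 : G* = -1, error iff G = 1, and t1 ≤ t2
    have hGs : ∀ g ω, ω ∈ E g x → Gstar ω = -1 := by
      intro g ω hω
      have hWneg : W ω < 0 := by
        rw [hWconst g ω hω]
        exact mul_neg_of_pos_of_neg hninv hS
      rw [hGstar, if_neg (by push_neg; linarith), if_pos hWneg]
    have e1 : Astar ∩ E 1 x = E 1 x := by
      ext ω
      simp only [Set.mem_inter_iff, and_iff_right_iff_imp]
      intro hE
      rw [hAstardef, Set.mem_setOf_eq, hGs 1 ω hE, ((hEmem 1 x ω).1 hE).1]
      decide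
    have e2 : Astar ∩ E (-1) x = ∅ := by
      ext ω
      simp only [Set.mem_inter_iff, Set.mem_empty_iff_false, iff_false, not_and]
      intro hA hE
      rw [hAstardef, Set.mem_setOf_eq] at hA
      exact hA (by rw [hGs (-1) ω hE, ((hEmem (-1) x ω).1 hE).1])
    rw [e1, e2, measure_empty, add_zero]
    have ht12 : μ (E 1 x) ≤ μ (E (-1) x) := by
      rw [hT1, hT2, hratio]
      exact ENNReal.ofReal_le_ofReal
        (by nlinarith [Real.exp_le_one_iff.mpr hS.le, Real.exp_pos S])
    calc μ (E 1 x) = (a + b) * μ (E 1 x) := by rw [hab, one_mul]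
      _ = a * μ (E 1 x) + b * μ (E 1 x) := by rw [add_mul]
      _ ≤ a * μ (E 1 x) + b * μ (E (-1) x) := by
          exact add_le_add_right (mul_le_mul' le_rfl ht12) _
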